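/- Fix x ∈ ℝ^n and b ∈ ℝ. Let s ⊆ ℝ^n be a convex set such that every a ∈ s satisfies a ≠ 0 and a·x + b ≥ 0. Then the function f(a) = (a·x + b)/‖a‖₂ is quasiconcave on s; that is, for every β ∈ ℝ the superlevel set {a ∈ s : f(a) ≥ β} is convex. -/
import Mathlib


open Matrix Finset

private lemma norm_eq_sqrt_aux {n : ℕ} (z : Fin n → ℝ) :
    Real.sqrt (∑ j, (z j) ^ 2) = ‖(WithLp.equiv 2 (Fin n → ℝ)).symm z‖ := by
  rw [EuclideanSpace.norm_eq]
  congr 1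
  refine Finset.sum_congr rfl fun j _ => ?_
  simp [Real.norm_eq_abs, sq_abs]

/-- The function `f(a) = (a·x + b)/‖a‖₂` is quasiconcave on a convex set
`s` on which every `a` satisfies `a ≠ 0` and `a·x + b ≥ 0`: every superlevel set is
convex. -/
theorem quasiconcave_dot_add_div_norm
    {n : ℕ} (x : Fin n → ℝ) (b : ℝ) (s : Set (Fin n → ℝ))
    (hs : Convex ℝ s)
    (hdom : ∀ a ∈ s, a ≠ 0 ∧ 0 ≤ a ⬝ᵥ x + b) :
    ∀ β : ℝ, Convex ℝ {a ∈ s | β ≤ (a ⬝ᵥ x + b) / Real.sqrt (∑ j, (a j) ^ 2)} := by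
  intro β
  have hNpos : ∀ a ∈ s, 0 < Real.sqrt (∑ j, (a j) ^ 2) := by
    intro a ha
    rw [norm_eq_sqrt_aux]
    have : (WithLp.equiv 2 (Fin n → ℝ)).symm a ≠ 0 := by
      simpa using (hdom a ha).1
    exact norm_pos_iff.mpr this
  by_cases hβ : β ≤ 0
  · have hset : {a ∈ s | β ≤ (a ⬝ᵥ x + b) / Real.sqrt (∑ j, (a j) ^ 2)} = s := by
      ext a
      simp only [Set.mem_setOf_eq, Set.mem_sep_iff]
      refine ⟨fun h => h.1, fun ha => ⟨ha, hβ.trans (div_nonneg (hdom a ha).2 (Real.sqrt_nonneg _))⟩⟩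
    rw [hset]; exact hs
  · push_neg at hβ
    intro a ha c hc t u ht hu htu
    obtain ⟨has, hafa⟩ := ha
    obtain ⟨hcs, hcfc⟩ := hc
    have hmem : t • a + u • c ∈ s := hs has hcs ht hu htu
    refine ⟨hmem, ?_⟩
    rw [le_div_iff₀ (hNpos _ hmem)]
    rw [le_div_iff₀ (hNpos a has)] at hafa
    rw [le_div_iff₀ (hNpos c hcs)] at hcfc
    have hdot : (t • a + u • c) ⬝ᵥ x + b
        = t * (a ⬝ᵥ x + b) + u * (c ⬝ᵥ x + b) := by
      rw [add_dotProduct, smul_dotProduct, smul_dotProduct]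
      simp only [smul_eq_mul]
      linear_combination (-b) * htu
    have htri : Real.sqrt (∑ j, ((t • a + u • c) j) ^ 2)
        ≤ t * Real.sqrt (∑ j, (a j) ^ 2) + u * Real.sqrt (∑ j, (c j) ^ 2) := by
      rw [norm_eq_sqrt_aux, norm_eq_sqrt_aux, norm_eq_sqrt_aux]
      have : (WithLp.equiv 2 (Fin n → ℝ)).symm (t • a + u • c)
          = t • (WithLp.equiv 2 (Fin n → ℝ)).symm a + u • (WithLp.equiv 2 (Fin n → ℝ)).symm c := by
        rfl
      rw [this]
      calc ‖t • (WithLp.equiv 2 (Fin n → ℝ)).symm a + u • (WithLp.equiv 2 (Fin n → ℝ)).symm c‖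
          ≤ ‖t • (WithLp.equiv 2 (Fin n → ℝ)).symm a‖ + ‖u • (WithLp.equiv 2 (Fin n → ℝ)).symm c‖ :=
            norm_add_le _ _
        _ = t * ‖(WithLp.equiv 2 (Fin n → ℝ)).symm a‖ + u * ‖(WithLp.equiv 2 (Fin n → ℝ)).symm c‖ := by
            rw [norm_smul, norm_smul, Real.norm_of_nonneg ht, Real.norm_of_nonneg hu]
    calc β * Real.sqrt (∑ j, ((t • a + u • c) j) ^ 2)
        ≤ β * (t * Real.sqrt (∑ j, (a j) ^ 2) + u * Real.sqrt (∑ j, (c j) ^ 2)) :=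
          mul_le_mul_of_nonneg_left htri hβ.le
      _ = t * (β * Real.sqrt (∑ j, (a j) ^ 2)) + u * (β * Real.sqrt (∑ j, (c j) ^ 2)) := by ring
      _ ≤ t * (a ⬝ᵥ x + b) + u * (c ⬝ᵥ x + b) := by
          exact add_le_add (mul_le_mul_of_nonneg_left hafa ht) (mul_le_mul_of_nonneg_left hcfc hu)
      _ = (t • a + u • c) ⬝ᵥ x + b := hdot.symm
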